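/- Let g01, g11, g12, g21, g22, g23, g24 : ℝ² → ℝ. The second-order operator P u = g01·u + g11·∂₁u + g12·∂₂u + g21·∂₁²u + (g22+g23)·∂₁∂₂u + g24·∂₂²u equals the composition (b10 + b11∂₁ + b12∂₂)∘(b20 + b21∂₁ + b22∂₂) on all C² functions if and only if: g21 = b11 b21, g22+g23 = b12 b21 + b11 b22, g24 = b12 b22, g11 = b10 b21 + b11 b20 + L(b21), g12 = b10 b22 + b12 b20 + L(b22), g01 = b10 b20 + L(b20), where L = b11∂₁ + b12∂₂. -/

import Mathlib

noncomputable def pd1 (f : ℝ × ℝ → ℝ) (p : ℝ × ℝ) : ℝ := fderiv ℝ f p (1, 0)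

noncomputable def pd2 (f : ℝ × ℝ → ℝ) (p : ℝ × ℝ) : ℝ := fderiv ℝ f p (0, 1)

section Stmt7Aux

variable {f g u b10 b11 b12 b20 b21 b22 : ℝ × ℝ → ℝ} {p : ℝ × ℝ} {L : ℝ × ℝ →L[ℝ] ℝ}

lemma pd1_add' (hf : DifferentiableAt ℝ f p) (hg : DifferentiableAt ℝ g p) :
    pd1 (fun q => f q + g q) p = pd1 f p + pd1 g p := by
  simp [pd1, fderiv_fun_add hf hg]

lemma pd2_add' (hf : DifferentiableAt ℝ f p) (hg : DifferentiableAt ℝ g p) :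
    pd2 (fun q => f q + g q) p = pd2 f p + pd2 g p := by
  simp [pd2, fderiv_fun_add hf hg]

lemma pd1_mul' (hf : DifferentiableAt ℝ f p) (hg : DifferentiableAt ℝ g p) :
    pd1 (fun q => f q * g q) p = pd1 f p * g p + f p * pd1 g p := by
  simp [pd1, fderiv_fun_mul hf hg]; ring

lemma pd2_mul' (hf : DifferentiableAt ℝ f p) (hg : DifferentiableAt ℝ g p) :
    pd2 (fun q => f q * g q) p = pd2 f p * g p + f p * pd2 g p := by
  simp [pd2, fderiv_fun_mul hf hg]; ring

lemma diffAt_pd1 (hu : ContDiff ℝ 2 u) : DifferentiableAt ℝ (pd1 u) p := by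
  have h : ContDiff ℝ 1 (fderiv ℝ u) := hu.fderiv_right (by norm_num)
  exact ((h.differentiable one_ne_zero) p).clm_apply (differentiableAt_const _)

lemma diffAt_pd2 (hu : ContDiff ℝ 2 u) : DifferentiableAt ℝ (pd2 u) p := by
  have h : ContDiff ℝ 1 (fderiv ℝ u) := hu.fderiv_right (by norm_num)
  exact ((h.differentiable one_ne_zero) p).clm_apply (differentiableAt_const _)

lemma pd_symm (hu : ContDiff ℝ 2 u) (p : ℝ × ℝ) : pd1 (pd2 u) p = pd2 (pd1 u) p := by
  have h1 : ContDiff ℝ 1 (fderiv ℝ u) := hu.fderiv_right (by norm_num)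
  have hd : DifferentiableAt ℝ (fderiv ℝ u) p := (h1.differentiable one_ne_zero) p
  have hsymm : IsSymmSndFDerivAt ℝ u p := hu.contDiffAt.isSymmSndFDerivAt (by norm_num)
  have key : ∀ v w : ℝ × ℝ,
      fderiv ℝ (fun q => fderiv ℝ u q v) p w = fderiv ℝ (fderiv ℝ u) p w v := by
    intro v w
    rw [fderiv_clm_apply hd (differentiableAt_const v)]
    simp
  show fderiv ℝ (pd2 u) p (1,0) = fderiv ℝ (pd1 u) p (0,1)
  have e2 : pd2 u = fun q => fderiv ℝ u q (0,1) := rfl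
  have e1 : pd1 u = fun q => fderiv ℝ u q (1,0) := rfl
  rw [e1, e2, key, key]
  exact hsymm _ _

lemma expand1 (hb20 : ContDiff ℝ 1 b20) (hb21 : ContDiff ℝ 1 b21) (hb22 : ContDiff ℝ 1 b22)
    (hu : ContDiff ℝ 2 u) (p : ℝ × ℝ) :
    pd1 (fun q => b20 q * u q + b21 q * pd1 u q + b22 q * pd2 u q) p
      = pd1 b20 p * u p + b20 p * pd1 u p + pd1 b21 p * pd1 u p + b21 p * pd1 (pd1 u) p
        + pd1 b22 p * pd2 u p + b22 p * pd1 (pd2 u) p := by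
  have d20 : DifferentiableAt ℝ b20 p := (hb20.differentiable one_ne_zero) p
  have d21 : DifferentiableAt ℝ b21 p := (hb21.differentiable one_ne_zero) p
  have d22 : DifferentiableAt ℝ b22 p := (hb22.differentiable one_ne_zero) p
  have du : DifferentiableAt ℝ u p := (hu.differentiable (by norm_num)) p
  have du1 : DifferentiableAt ℝ (pd1 u) p := diffAt_pd1 hu
  have du2 : DifferentiableAt ℝ (pd2 u) p := diffAt_pd2 hu
  have h1 : DifferentiableAt ℝ (fun q => b20 q * u q) p := d20.mul du
  have h2 : DifferentiableAt ℝ (fun q => b21 q * pd1 u q) p := d21.mul du1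
  have h3 : DifferentiableAt ℝ (fun q => b22 q * pd2 u q) p := d22.mul du2
  rw [pd1_add' (f := fun q => b20 q * u q + b21 q * pd1 u q) (h1.add h2) h3, pd1_add' h1 h2, pd1_mul' d20 du, pd1_mul' d21 du1,
    pd1_mul' d22 du2]
  ring

lemma expand2 (hb20 : ContDiff ℝ 1 b20) (hb21 : ContDiff ℝ 1 b21) (hb22 : ContDiff ℝ 1 b22)
    (hu : ContDiff ℝ 2 u) (p : ℝ × ℝ) :
    pd2 (fun q => b20 q * u q + b21 q * pd1 u q + b22 q * pd2 u q) p
      = pd2 b20 p * u p + b20 p * pd2 u p + pd2 b21 p * pd1 u p + b21 p * pd1 (pd2 u) p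
        + pd2 b22 p * pd2 u p + b22 p * pd2 (pd2 u) p := by
  have d20 : DifferentiableAt ℝ b20 p := (hb20.differentiable one_ne_zero) p
  have d21 : DifferentiableAt ℝ b21 p := (hb21.differentiable one_ne_zero) p
  have d22 : DifferentiableAt ℝ b22 p := (hb22.differentiable one_ne_zero) p
  have du : DifferentiableAt ℝ u p := (hu.differentiable (by norm_num)) p
  have du1 : DifferentiableAt ℝ (pd1 u) p := diffAt_pd1 hu
  have du2 : DifferentiableAt ℝ (pd2 u) p := diffAt_pd2 hu
  have h1 : DifferentiableAt ℝ (fun q => b20 q * u q) p := d20.mul du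
  have h2 : DifferentiableAt ℝ (fun q => b21 q * pd1 u q) p := d21.mul du1
  have h3 : DifferentiableAt ℝ (fun q => b22 q * pd2 u q) p := d22.mul du2
  rw [pd2_add' (f := fun q => b20 q * u q + b21 q * pd1 u q) (h1.add h2) h3, pd2_add' h1 h2, pd2_mul' d20 du, pd2_mul' d21 du1,
    pd2_mul' d22 du2, pd_symm hu p]
  ring

lemma rhs_eq (hb20 : ContDiff ℝ 1 b20) (hb21 : ContDiff ℝ 1 b21) (hb22 : ContDiff ℝ 1 b22)
    (hu : ContDiff ℝ 2 u) (p : ℝ × ℝ) :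
    b10 p * (b20 p * u p + b21 p * pd1 u p + b22 p * pd2 u p)
        + b11 p * pd1 (fun q => b20 q * u q + b21 q * pd1 u q + b22 q * pd2 u q) p
        + b12 p * pd2 (fun q => b20 q * u q + b21 q * pd1 u q + b22 q * pd2 u q) p
      = (b10 p * b20 p + (b11 p * pd1 b20 p + b12 p * pd2 b20 p)) * u p
        + (b10 p * b21 p + b11 p * b20 p + (b11 p * pd1 b21 p + b12 p * pd2 b21 p)) * pd1 u p
        + (b10 p * b22 p + b12 p * b20 p + (b11 p * pd1 b22 p + b12 p * pd2 b22 p)) * pd2 u p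
        + (b11 p * b21 p) * pd1 (pd1 u) p
        + (b12 p * b21 p + b11 p * b22 p) * pd1 (pd2 u) p
        + (b12 p * b22 p) * pd2 (pd2 u) p := by
  rw [expand1 hb20 hb21 hb22 hu p, expand2 hb20 hb21 hb22 hu p]
  ring

lemma pd1_of (h : HasFDerivAt f L p) : pd1 f p = L (1,0) := by rw [pd1, h.fderiv]
lemma pd2_of (h : HasFDerivAt f L p) : pd2 f p = L (0,1) := by rw [pd2, h.fderiv]

lemma pd1_constf (c : ℝ) : pd1 (fun _ : ℝ × ℝ => c) = fun _ => 0 := by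
  funext q; simp [pd1]
lemma pd2_constf (c : ℝ) : pd2 (fun _ : ℝ × ℝ => c) = fun _ => 0 := by
  funext q; simp [pd2]
lemma pd1_x : pd1 (fun q : ℝ × ℝ => q.1) = fun _ => 1 := by
  funext q; rw [pd1_of hasFDerivAt_fst]; simp
lemma pd2_x : pd2 (fun q : ℝ × ℝ => q.1) = fun _ => 0 := by
  funext q; rw [pd2_of hasFDerivAt_fst]; simp
lemma pd1_y : pd1 (fun q : ℝ × ℝ => q.2) = fun _ => 0 := by
  funext q; rw [pd1_of hasFDerivAt_snd]; simp
lemma pd2_y : pd2 (fun q : ℝ × ℝ => q.2) = fun _ => 1 := by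
  funext q; rw [pd2_of hasFDerivAt_snd]; simp

lemma hxx : ∀ q : ℝ × ℝ, HasFDerivAt (fun r : ℝ × ℝ => r.1 * r.1)
    (q.1 • ContinuousLinearMap.fst ℝ ℝ ℝ + q.1 • ContinuousLinearMap.fst ℝ ℝ ℝ) q :=
  fun _ => hasFDerivAt_fst.mul hasFDerivAt_fst
lemma hxy : ∀ q : ℝ × ℝ, HasFDerivAt (fun r : ℝ × ℝ => r.1 * r.2)
    (q.1 • ContinuousLinearMap.snd ℝ ℝ ℝ + q.2 • ContinuousLinearMap.fst ℝ ℝ ℝ) q :=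
  fun _ => hasFDerivAt_fst.mul hasFDerivAt_snd
lemma hyy : ∀ q : ℝ × ℝ, HasFDerivAt (fun r : ℝ × ℝ => r.2 * r.2)
    (q.2 • ContinuousLinearMap.snd ℝ ℝ ℝ + q.2 • ContinuousLinearMap.snd ℝ ℝ ℝ) q :=
  fun _ => hasFDerivAt_snd.mul hasFDerivAt_snd

lemma pd1_xx : pd1 (fun r : ℝ × ℝ => r.1 * r.1) = fun q => q.1 + q.1 := by
  funext q; rw [pd1_of (hxx q)]; simp
lemma pd2_xx : pd2 (fun r : ℝ × ℝ => r.1 * r.1) = fun _ => 0 := by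
  funext q; rw [pd2_of (hxx q)]; simp
lemma pd1_xy : pd1 (fun r : ℝ × ℝ => r.1 * r.2) = fun q => q.2 := by
  funext q; rw [pd1_of (hxy q)]; simp
lemma pd2_xy : pd2 (fun r : ℝ × ℝ => r.1 * r.2) = fun q => q.1 := by
  funext q; rw [pd2_of (hxy q)]; simp
lemma pd1_yy : pd1 (fun r : ℝ × ℝ => r.2 * r.2) = fun _ => 0 := by
  funext q; rw [pd1_of (hyy q)]; simp
lemma pd2_yy : pd2 (fun r : ℝ × ℝ => r.2 * r.2) = fun q => q.2 + q.2 := by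
  funext q; rw [pd2_of (hyy q)]; simp
lemma pd1_xplus : pd1 (fun q : ℝ × ℝ => q.1 + q.1) = fun _ => 2 := by
  funext q; rw [pd1_of (f := fun q : ℝ × ℝ => q.1 + q.1) (hasFDerivAt_fst.add hasFDerivAt_fst)]; simp; norm_num
lemma pd2_xplus : pd2 (fun q : ℝ × ℝ => q.1 + q.1) = fun _ => 0 := by
  funext q; rw [pd2_of (f := fun q : ℝ × ℝ => q.1 + q.1) (hasFDerivAt_fst.add hasFDerivAt_fst)]; simp
lemma pd1_yplus : pd1 (fun q : ℝ × ℝ => q.2 + q.2) = fun _ => 0 := by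
  funext q; rw [pd1_of (f := fun q : ℝ × ℝ => q.2 + q.2) (hasFDerivAt_snd.add hasFDerivAt_snd)]; simp
lemma pd2_yplus : pd2 (fun q : ℝ × ℝ => q.2 + q.2) = fun _ => 2 := by
  funext q; rw [pd2_of (f := fun q : ℝ × ℝ => q.2 + q.2) (hasFDerivAt_snd.add hasFDerivAt_snd)]; simp; norm_num

end Stmt7Aux

theorem stmt_7 (g01 g11 g12 g21 g22 g23 g24 b10 b11 b12 b20 b21 b22 : ℝ × ℝ → ℝ)
    (hb20 : ContDiff ℝ 1 b20) (hb21 : ContDiff ℝ 1 b21) (hb22 : ContDiff ℝ 1 b22) :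
    (∀ u : ℝ × ℝ → ℝ, ContDiff ℝ 2 u → ∀ p : ℝ × ℝ,
        g01 p * u p + g11 p * pd1 u p + g12 p * pd2 u p
          + g21 p * pd1 (pd1 u) p + (g22 p + g23 p) * pd1 (pd2 u) p + g24 p * pd2 (pd2 u) p
        = b10 p * (b20 p * u p + b21 p * pd1 u p + b22 p * pd2 u p)
            + b11 p * pd1 (fun q => b20 q * u q + b21 q * pd1 u q + b22 q * pd2 u q) p
            + b12 p * pd2 (fun q => b20 q * u q + b21 q * pd1 u q + b22 q * pd2 u q) p)
      ↔ (∀ p : ℝ × ℝ,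
          g21 p = b11 p * b21 p
          ∧ g22 p + g23 p = b12 p * b21 p + b11 p * b22 p
          ∧ g24 p = b12 p * b22 p
          ∧ g11 p = b10 p * b21 p + b11 p * b20 p + (b11 p * pd1 b21 p + b12 p * pd2 b21 p)
          ∧ g12 p = b10 p * b22 p + b12 p * b20 p + (b11 p * pd1 b22 p + b12 p * pd2 b22 p)
          ∧ g01 p = b10 p * b20 p + (b11 p * pd1 b20 p + b12 p * pd2 b20 p)) := by
  constructor
  · intro H p
    have key : ∀ u : ℝ × ℝ → ℝ, ContDiff ℝ 2 u →
        g01 p * u p + g11 p * pd1 u p + g12 p * pd2 u p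
          + g21 p * pd1 (pd1 u) p + (g22 p + g23 p) * pd1 (pd2 u) p + g24 p * pd2 (pd2 u) p
        = (b10 p * b20 p + (b11 p * pd1 b20 p + b12 p * pd2 b20 p)) * u p
          + (b10 p * b21 p + b11 p * b20 p + (b11 p * pd1 b21 p + b12 p * pd2 b21 p)) * pd1 u p
          + (b10 p * b22 p + b12 p * b20 p + (b11 p * pd1 b22 p + b12 p * pd2 b22 p)) * pd2 u p
          + (b11 p * b21 p) * pd1 (pd1 u) p
          + (b12 p * b21 p + b11 p * b22 p) * pd1 (pd2 u) p
          + (b12 p * b22 p) * pd2 (pd2 u) p :=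
      fun u hu => (H u hu p).trans (rhs_eq hb20 hb21 hb22 hu p)
    have k1 := key (fun _ => (1:ℝ)) contDiff_const
    simp only [pd1_constf, pd2_constf] at k1
    simp only [mul_one, mul_zero, add_zero] at k1
    have k2 := key (fun q => q.1) contDiff_fst
    simp only [pd1_x, pd2_x, pd1_constf, pd2_constf] at k2
    simp only [mul_one, mul_zero, add_zero] at k2
    have k3 := key (fun q => q.2) contDiff_snd
    simp only [pd1_y, pd2_y, pd1_constf, pd2_constf] at k3
    simp only [mul_one, mul_zero, add_zero, zero_add] at k3
    have k4 := key (fun r => r.1 * r.1) (contDiff_fst.mul contDiff_fst)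
    simp only [pd1_xx, pd2_xx, pd1_xplus, pd2_xplus, pd1_constf, pd2_constf] at k4
    simp only [mul_one, mul_zero, add_zero] at k4
    have k5 := key (fun r => r.1 * r.2) (contDiff_fst.mul contDiff_snd)
    simp only [pd1_xy, pd2_xy, pd1_x, pd2_x, pd1_y, pd2_y] at k5
    simp only [mul_one, mul_zero, add_zero] at k5
    have k6 := key (fun r => r.2 * r.2) (contDiff_snd.mul contDiff_snd)
    simp only [pd1_yy, pd2_yy, pd1_yplus, pd2_yplus, pd1_constf, pd2_constf] at k6
    simp only [mul_one, mul_zero, add_zero, zero_add] at k6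
    refine ⟨?_, ?_, ?_, ?_, ?_, ?_⟩
    · linear_combination k4 / 2 + (p.1 * p.1 / 2) * k1 - p.1 * k2
    · linear_combination k5 - p.2 * k2 - p.1 * k3 + (p.1 * p.2) * k1
    · linear_combination k6 / 2 + (p.2 * p.2 / 2) * k1 - p.2 * k3
    · linear_combination k2 - p.1 * k1
    · linear_combination k3 - p.2 * k1
    · linear_combination k1
  · intro h u hu p
    obtain ⟨h1, h2, h3, h4, h5, h6⟩ := h p
    rw [rhs_eq hb20 hb21 hb22 hu p, h1, h2, h3, h4, h5, h6]
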